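/- arXiv:1309.3441 — 2 statements merged into one kernel-verified Lean document; each statement's English description precedes it below -/
import Mathlib

section
/- The Fibonacci word f — the unique right-infinite binary word starting with 0 that is a fixed point of the substitution φ with φ(0) = 01 and φ(1) = 0 (equivalently, f = lim f_n where f_0 = 0, f_1 = 01, and f_{n+1} = f_n f_{n-1}) — is an infinite Sturmian word; that is, p_f(n) = n + 1 for all n ≥ 1. -/
/-- A finite word `u` is a subword (factor) of the right-infinite word `w` if
it occurs as a contiguous block of consecutive letters of `w`. -/
def IsFactor {A : Type*} (w : ℕ → A) (u : List A) : Prop :=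
  ∃ i : ℕ, u = (List.range u.length).map fun j => w (i + j)

/-- The subword complexity of a right-infinite word `w`: the number of
distinct subwords of `w` of length `n`. -/
noncomputable def icomplexity {A : Type*} (w : ℕ → A) (n : ℕ) : ℕ :=
  Set.ncard {u : List A | u.length = n ∧ IsFactor w u}

/-- The finite Fibonacci words, with `0 = false` and `1 = true`:
`f 0 = 0`, `f 1 = 01`, `f (n+2) = f (n+1) ++ f n`.  Each `fibSeq n` is a
prefix of `fibSeq (n+1)`, and these are precisely the iterates `φⁿ(0)` of the
substitution `φ(0) = 01`, `φ(1) = 0`. -/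
def fibSeq : ℕ → List Bool
  | 0 => [false]
  | 1 => [false, true]
  | (n + 2) => fibSeq (n + 1) ++ fibSeq n

/-- The infinite Fibonacci word, the direct limit of the words `fibSeq n`
(equivalently, the unique fixed point of `φ(0) = 01`, `φ(1) = 0` starting
with `0`): its `i`-th letter is the `i`-th letter of any `fibSeq n` long
enough, e.g. `fibSeq (i+1)`, whose length exceeds `i`. -/
def fibWord : ℕ → Bool := fun i => (fibSeq (i + 1)).getD i false

open scoped goldenRatio


lemma sqrt5_ge : (2:ℝ) ≤ √5 := by
  rw [show (2:ℝ) = √4 by rw [show (4:ℝ) = 2^2 by norm_num, Real.sqrt_sq]; norm_num]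
  exact Real.sqrt_le_sqrt (by norm_num)

lemma gold_ge : (3/2 : ℝ) ≤ φ := by
  have := sqrt5_ge; unfold Real.goldenRatio; linarith

lemma inv_gold_le : φ⁻¹ ≤ 2/3 := by
  rw [inv_le_comm₀ Real.goldenRatio_pos (by norm_num)]
  have := gold_ge; linarith

lemma inv_gold_pos : 0 < φ⁻¹ := inv_pos.2 Real.goldenRatio_pos

lemma inv_gold_eq : φ⁻¹ = φ - 1 := by
  have hsq : φ^2 = φ + 1 := Real.goldenRatio_sq
  exact inv_eq_of_mul_eq_one_right (by nlinarith)

lemma abs_goldConj_pow (n : ℕ) : |ψ ^ n| = φ⁻¹ ^ n := by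
  rw [abs_pow, abs_of_neg Real.goldenConj_neg, ← Real.inv_goldenRatio]

lemma fib_mul_gold (n : ℕ) : (Nat.fib n : ℝ) * φ = Nat.fib (n+1) - ψ ^ n := by
  have := Real.fib_succ_sub_goldenRatio_mul_fib n; linarith [this]

lemma gold_approx : ∀ t : ℕ, ∀ m : ℕ, 1 ≤ m → m < Nat.fib (t+1) → ∀ p : ℤ,
    φ⁻¹ ^ t ≤ |(m:ℝ) * φ - p| := by
  intro t
  induction t using Nat.strong_induction_on with
  | _ t ih =>
    match t with
    | 0 => intro m h1 h2 p; simp [Nat.fib] at h2; omega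
    | 1 => intro m h1 h2 p; simp [Nat.fib] at h2; omega
    | 2 =>
      intro m h1 h2 p
      have hm : m = 1 := by simp [show Nat.fib 3 = 2 by decide] at h2; omega
      subst hm
      have hsq : φ^2 = φ + 1 := Real.goldenRatio_sq
      have hg := gold_ge
      have key : φ⁻¹^2 = 2 - φ := by rw [inv_gold_eq]; nlinarith
      rw [key]
      push_cast
      rcases le_or_gt (p:ℝ) 1 with hp | hp
      · rw [abs_of_nonneg (by nlinarith)]; nlinarith
      · have hp2 : (2:ℝ) ≤ p := by exact_mod_cast hp
        rw [abs_of_nonpos (by nlinarith)]; nlinarith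
    | (s+3) =>
      intro m h1 h2 p
      rcases lt_or_ge m (Nat.fib (s+3)) with hm | hm
      · have h := ih (s+2) (by omega) m h1 hm p
        calc φ⁻¹^(s+3) ≤ φ⁻¹^(s+2) :=
              pow_le_pow_of_le_one (le_of_lt inv_gold_pos) (by linarith [inv_gold_le]) (by omega)
          _ ≤ _ := h
      · set r := m - Nat.fib (s+3) with hrdef
        have hmr : m = r + Nat.fib (s+3) := by omega
        have hr2 : r < Nat.fib (s+2) := by
          have h4 : Nat.fib (s+4) = Nat.fib (s+2) + Nat.fib (s+3) := Nat.fib_add_two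
          have h2' : m < Nat.fib (s+4) := h2
          omega
        set Q : ℤ := p - (Nat.fib (s+4) : ℤ) with hQdef
        have hkey : (m:ℝ) * φ - p = ((r:ℝ) * φ - (Q:ℝ)) - ψ^(s+3) := by
          have hf := fib_mul_gold (s+3)
          rw [hmr, hQdef]; push_cast
          rw [show s+3+1 = s+4 from rfl] at hf
          nlinarith [hf]
        have habs := abs_goldConj_pow (s+3)
        have hpow_small : φ⁻¹^(s+3) ≤ (2/3:ℝ)^(s+3) :=
          pow_le_pow_left₀ (le_of_lt inv_gold_pos) inv_gold_le _
        have h23 : ((2:ℝ)/3)^(s+3) ≤ (2/3)^3 :=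
          pow_le_pow_of_le_one (by norm_num) (by norm_num) (by omega)
        have h5 : φ⁻¹^(s+3) ≤ 8/27 := by
          calc φ⁻¹^(s+3) ≤ _ := hpow_small
            _ ≤ (2/3)^3 := h23
            _ ≤ 8/27 := by norm_num
        rw [hkey]
        rcases Nat.eq_zero_or_pos r with hr0 | hr1
        · rcases eq_or_ne Q 0 with hq | hq
          · rw [hr0, hq]
            push_cast
            rw [show (0:ℝ) * φ - 0 - ψ^(s+3) = -(ψ^(s+3)) by ring, abs_neg, habs]
          · have hq1 : (1:ℝ) ≤ |(Q:ℝ)| := by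
              rw [← Int.cast_abs]; exact_mod_cast Int.one_le_abs hq
            have htri := abs_sub_abs_le_abs_sub ((r:ℝ) * φ - (Q:ℝ)) (ψ^(s+3))
            have h6 : |(r:ℝ) * φ - (Q:ℝ)| = |(Q:ℝ)| := by
              rw [hr0]; push_cast; rw [zero_mul, zero_sub, abs_neg]
            rw [habs] at htri
            linarith
        · have ihr := ih (s+1) (by omega) r hr1 hr2 Q
          have hsq : φ^2 = φ + 1 := Real.goldenRatio_sq
          have hc : φ⁻¹^2 * φ^2 = 1 := by
            rw [← mul_pow, inv_mul_cancel₀ Real.goldenRatio_ne_zero, one_pow]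
          have hpowrel : φ⁻¹^(s+3) * φ^2 = φ⁻¹^(s+1) := by
            rw [show s+3 = (s+1)+2 from rfl, pow_add, mul_assoc, hc, mul_one]
          have hxpos : (0:ℝ) < φ⁻¹^(s+3) := pow_pos inv_gold_pos _
          have htri := abs_sub_abs_le_abs_sub ((r:ℝ) * φ - (Q:ℝ)) (ψ^(s+3))
          rw [habs] at htri
          nlinarith [gold_ge]



lemma sqrt5_le : √5 ≤ (23/10:ℝ) := by
  rw [show (23/10:ℝ) = √((23/10)^2) by rw [Real.sqrt_sq]; norm_num]
  exact Real.sqrt_le_sqrt (by norm_num)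

lemma gold_le : φ ≤ (165/100 : ℝ) := by
  have := sqrt5_le; unfold Real.goldenRatio; linarith

lemma nat_mul_gold_irrational (m : ℕ) (hm : 1 ≤ m) (p : ℤ) : (m:ℝ) * φ ≠ p := by
  have h : Irrational ((m:ℝ) * φ) := by
    have := (Irrational.ratCast_mul Real.goldenRatio_irrational (q := (m:ℚ)) (Nat.cast_ne_zero.2 (by omega)))
    have h2 : ((m:ℚ):ℝ) * φ = (m:ℝ) * φ := by push_cast; ring
    rw [h2] at this; exact this
  exact h.ne_int p

lemma gold_jump (t : ℕ) (m : ℕ) (h1 : 1 ≤ m) (h2 : m ≤ Nat.fib (t+2) + 1) :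
    ⌊((m + Nat.fib (t+3) : ℕ) : ℝ) * φ⌋ = ⌊(m:ℝ) * φ⌋ + (Nat.fib (t+4) : ℤ) := by
  have hfib4 : Nat.fib (t+4) = Nat.fib (t+2) + Nat.fib (t+3) := Nat.fib_add_two
  have hfib3 : Nat.fib (t+3) = Nat.fib (t+1) + Nat.fib (t+2) := Nat.fib_add_two
  have hf1 : 1 ≤ Nat.fib (t+1) := Nat.fib_pos.2 (by omega)
  have hf2 : 1 ≤ Nat.fib (t+2) := Nat.fib_pos.2 (by omega)
  have hmlt : m < Nat.fib (t+4) := by omega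
  have happrox := gold_approx (t+3) m h1 hmlt
  set x : ℝ := (m:ℝ) * φ with hx
  have hfl : (⌊x⌋:ℝ) ≤ x := Int.floor_le x
  have hfu : x < ⌊x⌋ + 1 := Int.lt_floor_add_one x
  have hθ1 : φ⁻¹^(t+3) ≤ x - ⌊x⌋ := by
    have := happrox ⌊x⌋; rwa [abs_of_nonneg (by linarith)] at this
  have hθ2 : φ⁻¹^(t+3) ≤ (⌊x⌋ + 1) - x := by
    have := happrox (⌊x⌋ + 1)
    rw [abs_of_nonpos (by push_cast; linarith)] at this
    push_cast at this ⊢; linarith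
  have hexp : ((m + Nat.fib (t+3) : ℕ) : ℝ) * φ = x + (Nat.fib (t+4):ℝ) - ψ^(t+3) := by
    have hf := fib_mul_gold (t+3)
    push_cast [show t+3+1 = t+4 from rfl] at hf ⊢
    nlinarith [hf]
  have hpsi : |ψ^(t+3)| = φ⁻¹^(t+3) := abs_goldConj_pow (t+3)
  have hne : x + (Nat.fib (t+4):ℝ) - ψ^(t+3) ≠ ((⌊x⌋ + 1 + (Nat.fib (t+4):ℤ) : ℤ) : ℝ) := by
    rw [← hexp]
    exact nat_mul_gold_irrational _ (by omega) _
  rw [hexp, Int.floor_eq_iff]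
  constructor
  · push_cast
    have : ψ^(t+3) ≤ φ⁻¹^(t+3) := le_of_abs_le (le_of_eq hpsi)
    linarith
  · have hle : x + (Nat.fib (t+4):ℝ) - ψ^(t+3) ≤ ((⌊x⌋ + 1 + (Nat.fib (t+4):ℤ) : ℤ) : ℝ) := by
      have : -ψ^(t+3) ≤ φ⁻¹^(t+3) := by
        have := neg_abs_le (ψ^(t+3)); rw [hpsi] at this; linarith
      push_cast; linarith
    have := lt_of_le_of_ne hle hne
    push_cast at this ⊢; linarith





noncomputable def gdiff (k : ℕ) : ℤ := ⌊((k+2:ℕ):ℝ) * φ⌋ - ⌊((k+1:ℕ):ℝ) * φ⌋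

noncomputable def gletter (k : ℕ) : Bool := decide (gdiff k = 1)

lemma gdiff_one_or_two (k : ℕ) : gdiff k = 1 ∨ gdiff k = 2 := by
  unfold gdiff
  have hx : ((k+2:ℕ):ℝ) * φ = ((k+1:ℕ):ℝ) * φ + φ := by push_cast; ring
  rw [hx]
  set x : ℝ := ((k+1:ℕ):ℝ) * φ with hxd
  have h1 : ⌊x⌋ + 1 ≤ ⌊x + φ⌋ := by
    rw [show ⌊x⌋ + 1 = ⌊x + 1⌋ by rw [Int.floor_add_one]]
    exact Int.floor_le_floor (by linarith [gold_ge])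
  have h2 : ⌊x + φ⌋ ≤ ⌊x⌋ + 2 := by
    rw [show (⌊x⌋ + 2 : ℤ) = ⌊x + ((2:ℤ):ℝ)⌋ by rw [Int.floor_add_intCast],
        show ((2:ℤ):ℝ) = 2 by norm_num]
    exact Int.floor_le_floor (by linarith [gold_le])
  omega

lemma floor_gold1 : ⌊φ⌋ = 1 := by
  rw [Int.floor_eq_iff]
  constructor <;> push_cast <;> [linarith [gold_ge]; linarith [gold_le]]

lemma floor_gold2 : ⌊(2:ℝ) * φ⌋ = 3 := by
  rw [Int.floor_eq_iff]
  constructor <;> push_cast <;> [linarith [gold_ge]; linarith [gold_le]]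

lemma floor_gold3 : ⌊(3:ℝ) * φ⌋ = 4 := by
  rw [Int.floor_eq_iff]
  constructor <;> push_cast <;> [linarith [gold_ge]; linarith [gold_le]]

lemma gdiff0 : gdiff 0 = 2 := by
  unfold gdiff
  norm_num [floor_gold1, floor_gold2]

lemma gdiff1 : gdiff 1 = 1 := by
  unfold gdiff
  norm_num [floor_gold2, floor_gold3]

lemma gletter0 : gletter 0 = false := by unfold gletter; rw [gdiff0]; decide

lemma gletter1 : gletter 1 = true := by unfold gletter; rw [gdiff1]; decide

lemma fibSeq_length : ∀ n, (fibSeq n).length = Nat.fib (n+2) := by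
  intro n
  induction n using Nat.strong_induction_on with
  | _ n ih =>
    match n with
    | 0 => rfl
    | 1 => rfl
    | (n+2) =>
      show (fibSeq (n+1) ++ fibSeq n).length = _
      rw [List.length_append, ih (n+1) (by omega), ih n (by omega)]
      have h1 : Nat.fib (n+4) = Nat.fib (n+2) + Nat.fib (n+3) := Nat.fib_add_two
      have e1 : Nat.fib (n+1+2) = Nat.fib (n+3) := rfl
      have e2 : Nat.fib (n+2+2) = Nat.fib (n+4) := rfl
      omega

lemma fibSeq_getD : ∀ n, ∀ k, k < Nat.fib (n+2) → (fibSeq n).getD k false = gletter k := by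
  intro n
  induction n using Nat.strong_induction_on with
  | _ n ih =>
    match n with
    | 0 =>
      intro k hk
      have hk0 : k = 0 := by simp [show Nat.fib 2 = 1 by decide] at hk; omega
      subst hk0; rw [gletter0]; rfl
    | 1 =>
      intro k hk
      have : k = 0 ∨ k = 1 := by simp [show Nat.fib 3 = 2 by decide] at hk; omega
      rcases this with h | h <;> subst h
      · rw [gletter0]; rfl
      · rw [gletter1]; rfl
    | (n+2) =>
      intro k hk
      have hlen1 : (fibSeq (n+1)).length = Nat.fib (n+3) := fibSeq_length (n+1)
      have hfib : Nat.fib (n+4) = Nat.fib (n+2) + Nat.fib (n+3) := Nat.fib_add_two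
      have hk4 : k < Nat.fib (n+4) := hk
      have efib : Nat.fib (n+2+2) = Nat.fib (n+4) := rfl
      rcases lt_or_ge k (Nat.fib (n+3)) with h | h
      · rw [show fibSeq (n+2) = fibSeq (n+1) ++ fibSeq n from rfl,
            List.getD_append _ _ _ _ (by rw [hlen1]; exact h)]
        exact ih (n+1) (by omega) k h
      · rw [show fibSeq (n+2) = fibSeq (n+1) ++ fibSeq n from rfl,
            List.getD_append_right _ _ _ _ (by rw [hlen1]; exact h), hlen1]
        set k' := k - Nat.fib (n+3) with hk'def
        have hk' : k' < Nat.fib (n+2) := by omega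
        rw [ih n (by omega) k' hk']
        have e1 := gold_jump n (k'+1) (by omega) (by omega)
        have e2 := gold_jump n (k'+2) (by omega) (by omega)
        have hdiff : gdiff k = gdiff k' := by
          unfold gdiff
          rw [show k + 1 = (k'+1) + Nat.fib (n+3) by omega,
              show k + 2 = (k'+2) + Nat.fib (n+3) by omega, e1, e2]
          ring
        unfold gletter
        rw [hdiff]

lemma lt_fib_add_three : ∀ k, k < Nat.fib (k+3) := by
  intro k
  induction k with
  | zero => decide
  | succ k ih =>
    have h1 : Nat.fib (k+5) = Nat.fib (k+3) + Nat.fib (k+4) := Nat.fib_add_two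
    have h2 : Nat.fib (k+4) = Nat.fib (k+2) + Nat.fib (k+3) := Nat.fib_add_two
    have h3 : 1 ≤ Nat.fib (k+2) := Nat.fib_pos.2 (by omega)
    have e1 : Nat.fib (k+1+3) = Nat.fib (k+4) := rfl
    omega

lemma fibWord_eq (k : ℕ) : fibWord k = gletter k := by
  have h : k < Nat.fib (k+3) := lt_fib_add_three k
  exact fibSeq_getD (k+1) k h






def win (i n : ℕ) : List Bool := (List.range n).map (fun j => fibWord (i+j))

lemma win_length (i n : ℕ) : (win i n).length = n := by simp [win]

lemma win_succ_right (i n : ℕ) : win i (n+1) = win i n ++ [fibWord (i+n)] := by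
  simp [win, List.range_succ]

lemma win_succ_left (i n : ℕ) : win i (n+1) = fibWord i :: win (i+1) n := by
  simp only [win, List.range_succ_eq_map, List.map_cons, List.map_map, add_zero]
  congr 1
  apply List.map_congr_left
  intro j _
  simp only [Function.comp_apply]
  congr 1
  omega

def Fset (n : ℕ) : Set (List Bool) := {u | u.length = n ∧ IsFactor fibWord u}

lemma win_mem (i n : ℕ) : win i n ∈ Fset n := by
  refine ⟨win_length i n, i, ?_⟩
  rw [win_length]
  rfl

lemma mem_Fset_iff {u : List Bool} {n : ℕ} : u ∈ Fset n ↔ ∃ i, u = win i n := by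
  constructor
  · rintro ⟨hlen, i, hu⟩
    exact ⟨i, by rw [hu, hlen]; rfl⟩
  · rintro ⟨i, rfl⟩
    exact win_mem i n

lemma Fset_finite (n : ℕ) : (Fset n).Finite :=
  (List.finite_length_eq Bool n).subset (fun u hu => hu.1)

lemma win_count (i n : ℕ) :
    ((win i n).count true : ℤ) = 2*n - (⌊((i+n+1:ℕ):ℝ)*φ⌋ - ⌊((i+1:ℕ):ℝ)*φ⌋) := by
  induction n with
  | zero => simp [win]
  | succ n ih =>
    rw [win_succ_right, List.count_append]
    have hg : gdiff (i+n) = ⌊((i+n+2:ℕ):ℝ)*φ⌋ - ⌊((i+n+1:ℕ):ℝ)*φ⌋ := rfl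
    have e1 : (i+(n+1)+1 : ℕ) = (i+n+2 : ℕ) := by omega
    rw [e1]
    have hcnt : ([fibWord (i+n)].count true : ℤ) = 2 - gdiff (i+n) := by
      rw [fibWord_eq]
      rcases gdiff_one_or_two (i+n) with h | h <;>
        simp [gletter, h, List.count_singleton]
    push_cast
    push_cast at ih
    rw [hg] at hcnt
    push_cast at hcnt
    linarith









-- floor subadditivity bounds
lemma floor_window (a n : ℕ) :
    ⌊((a:ℕ):ℝ)*φ⌋ + ⌊((n:ℕ):ℝ)*φ⌋ ≤ ⌊((a+n:ℕ):ℝ)*φ⌋ ∧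
    ⌊((a+n:ℕ):ℝ)*φ⌋ ≤ ⌊((a:ℕ):ℝ)*φ⌋ + ⌊((n:ℕ):ℝ)*φ⌋ + 1 := by
  have h1 : ((⌊((a:ℕ):ℝ)*φ⌋:ℝ)) ≤ (a:ℝ)*φ := Int.floor_le _
  have h2 : ((⌊((n:ℕ):ℝ)*φ⌋:ℝ)) ≤ (n:ℝ)*φ := Int.floor_le _
  have h3 : (a:ℝ)*φ < ⌊((a:ℕ):ℝ)*φ⌋ + 1 := Int.lt_floor_add_one _
  have h4 : (n:ℝ)*φ < ⌊((n:ℕ):ℝ)*φ⌋ + 1 := Int.lt_floor_add_one _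
  constructor
  · apply Int.le_floor.2
    push_cast
    nlinarith
  · apply Int.le_of_lt_add_one
    apply Int.lt_iff_add_one_le.2 ?_
    apply Int.add_one_le_iff.2
    apply Int.floor_lt.2
    push_cast
    nlinarith

lemma balance {u v : List Bool} {n : ℕ} (hu : u ∈ Fset n) (hv : v ∈ Fset n) :
    (u.count true : ℤ) - v.count true ≤ 1 := by
  obtain ⟨i, rfl⟩ := mem_Fset_iff.1 hu
  obtain ⟨j, rfl⟩ := mem_Fset_iff.1 hv
  have ci := win_count i n
  have cj := win_count j n
  have e1 : (i+n+1 : ℕ) = ((i+1)+n : ℕ) := by omega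
  have e2 : (j+n+1 : ℕ) = ((j+1)+n : ℕ) := by omega
  rw [e1] at ci
  rw [e2] at cj
  have b1 := floor_window (i+1) n
  have b2 := floor_window (j+1) n
  omega

-- closure lemmas
lemma tail_mem {u : List Bool} {n : ℕ} (hu : u ∈ Fset (n+1)) : u.tail ∈ Fset n := by
  obtain ⟨i, rfl⟩ := mem_Fset_iff.1 hu
  rw [win_succ_left]
  exact win_mem (i+1) n

lemma take_mem {u : List Bool} {n : ℕ} (hu : u ∈ Fset (n+1)) : u.take n ∈ Fset n := by
  obtain ⟨i, rfl⟩ := mem_Fset_iff.1 hu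
  rw [win_succ_right, List.take_left' (win_length i n)]
  exact win_mem i n

lemma ext_mem {w : List Bool} {n : ℕ} (hw : w ∈ Fset n) :
    ∃ a, w ++ [a] ∈ Fset (n+1) := by
  obtain ⟨i, rfl⟩ := mem_Fset_iff.1 hw
  exact ⟨fibWord (i+n), by rw [← win_succ_right]; exact win_mem i (n+1)⟩

def RS (w : List Bool) (n : ℕ) : Prop :=
  w.length = n ∧ w ++ [false] ∈ Fset (n+1) ∧ w ++ [true] ∈ Fset (n+1)

lemma RS_unique : ∀ n, ∀ w v : List Bool, RS w n → RS v n → w = v := by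
  intro n
  induction n with
  | zero =>
    intro w v hw hv
    rw [List.length_eq_zero_iff.1 hw.1, List.length_eq_zero_iff.1 hv.1]
  | succ n ih =>
    intro w v hw hv
    obtain ⟨a, w', rfl⟩ : ∃ a w', w = a :: w' := by
      cases w with
      | nil => exact absurd hw.1 (by simp)
      | cons a w' => exact ⟨a, w', rfl⟩
    obtain ⟨b, v', rfl⟩ : ∃ b v', v = b :: v' := by
      cases v with
      | nil => exact absurd hv.1 (by simp)
      | cons b v' => exact ⟨b, v', rfl⟩
    have hw' : RS w' n := by
      refine ⟨by simpa using hw.1, ?_, ?_⟩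
      · have := tail_mem (u := (a :: w') ++ [false]) hw.2.1
        simpa using this
      · have := tail_mem (u := (a :: w') ++ [true]) hw.2.2
        simpa using this
    have hv' : RS v' n := by
      refine ⟨by simpa using hv.1, ?_, ?_⟩
      · have := tail_mem (u := (b :: v') ++ [false]) hv.2.1
        simpa using this
      · have := tail_mem (u := (b :: v') ++ [true]) hv.2.2
        simpa using this
    have hs : w' = v' := ih w' v' hw' hv'
    subst hs
    rcases eq_or_ne a b with hab | hab
    · rw [hab]
    · exfalso
      -- one of a,b is true, other false; get true::w'++[true] and false::w'++[false]
      have hT : (true :: w') ++ [true] ∈ Fset (n+2) := by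
        cases a
        · cases b
          · simp at hab
          · exact hv.2.2
        · exact hw.2.2
      have hF : (false :: w') ++ [false] ∈ Fset (n+2) := by
        cases a
        · exact hw.2.1
        · cases b
          · exact hv.2.1
          · simp at hab
      have hbal := balance hT hF
      simp [List.count_cons, List.count_append] at hbal
      omega


lemma gdiff_of_letter {a b : ℕ} (h : gletter a = gletter b) : gdiff a = gdiff b := by
  unfold gletter at h
  rcases gdiff_one_or_two a with h1 | h1 <;> rcases gdiff_one_or_two b with h2 | h2 <;>
    simp [h1, h2] at h ⊢ <;> omega

lemma exists_RS (n : ℕ) (hn : 1 ≤ n) : ∃ w, RS w n := by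
  by_contra hcon
  push_neg at hcon
  -- determinism
  have det : ∀ i j, win i n = win j n → fibWord (i+n) = fibWord (j+n) := by
    intro i j hij
    by_contra hne
    apply hcon (win i n)
    have m1 : win i n ++ [fibWord (i+n)] ∈ Fset (n+1) := by
      rw [← win_succ_right]; exact win_mem _ _
    have m2 : win i n ++ [fibWord (j+n)] ∈ Fset (n+1) := by
      rw [hij, ← win_succ_right]; exact win_mem _ _
    refine ⟨win_length i n, ?_, ?_⟩
    · cases hfi : fibWord (i+n) <;> cases hfj : fibWord (j+n) <;>
        rw [hfi] at m1 <;> rw [hfj] at m2 <;> simp_all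
    · cases hfi : fibWord (i+n) <;> cases hfj : fibWord (j+n) <;>
        rw [hfi] at m1 <;> rw [hfj] at m2 <;> simp_all
  have shift : ∀ i j, win i n = win j n → win (i+1) n = win (j+1) n := by
    intro i j hij
    have h1 : win i (n+1) = win j (n+1) := by
      rw [win_succ_right, win_succ_right, hij, det i j hij]
    rw [win_succ_left, win_succ_left] at h1
    exact (List.cons_eq_cons.mp h1).2
  have iter : ∀ k i j, win i n = win j n → win (i+k) n = win (j+k) n := by
    intro k
    induction k with
    | zero => intro i j h; simpa using h
    | succ k ihk =>
      intro i j h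
      have := shift (i+k) (j+k) (ihk i j h)
      rwa [show i+k+1 = i+(k+1) by omega, show j+k+1 = j+(k+1) by omega] at this
  have heads : ∀ i j, win i n = win j n → fibWord i = fibWord j := by
    intro i j hij
    obtain ⟨m, rfl⟩ : ∃ m, n = m + 1 := ⟨n - 1, by omega⟩
    rw [win_succ_left i m, win_succ_left j m] at hij
    exact (List.cons_eq_cons.mp hij).1
  -- pigeonhole
  have hfin : Finite {l : List Bool // l.length = n} := (List.finite_length_eq Bool n).to_subtype
  obtain ⟨x', y', hxy, heq⟩ :=
    Finite.exists_ne_map_eq_of_infinite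
      (f := fun i : ℕ => (⟨win i n, win_length i n⟩ : {l : List Bool // l.length = n}))
  have hweq' : win x' n = win y' n := by simpa using heq
  obtain ⟨x, y, hlt, hweq⟩ : ∃ x y, x < y ∧ win x n = win y n := by
    rcases lt_or_gt_of_ne hxy with h | h
    · exact ⟨x', y', h, hweq'⟩
    · exact ⟨y', x', h, hweq'.symm⟩
  -- periodicity of letters
  have hper : ∀ m, fibWord (x + m) = fibWord (y + m) := fun m =>
    heads _ _ (iter m x y hweq)
  have hgd : ∀ m, gdiff (x + m) = gdiff (y + m) := by
    intro m
    have := hper m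
    rw [fibWord_eq, fibWord_eq] at this
    exact gdiff_of_letter this
  set c : ℤ := ⌊((y+1:ℕ):ℝ)*φ⌋ - ⌊((x+1:ℕ):ℝ)*φ⌋ with hc
  have const : ∀ m, ⌊((y+m+1:ℕ):ℝ)*φ⌋ - ⌊((x+m+1:ℕ):ℝ)*φ⌋ = c := by
    intro m
    induction m with
    | zero => simp [hc]
    | succ m ihm =>
      have hd := hgd m
      unfold gdiff at hd
      rw [show y+(m+1)+1 = y+m+2 by omega, show x+(m+1)+1 = x+m+2 by omega]
      omega
  set q : ℕ := y - x with hq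
  have hq1 : 1 ≤ q := by omega
  have hyx : y = x + q := by omega
  have mult : ∀ k : ℕ, ⌊((x+k*q+1:ℕ):ℝ)*φ⌋ = ⌊((x+1:ℕ):ℝ)*φ⌋ + k*c := by
    intro k
    induction k with
    | zero => simp
    | succ k ihk =>
      have h2 := const (k*q)
      have e : y + k*q + 1 = x + (k+1)*q + 1 := by
        have hqq : (k+1)*q = k*q + q := by ring
        omega
      rw [e] at h2
      have e2 : ((k+1:ℕ):ℤ)*c = (k:ℤ)*c + c := by push_cast; ring
      rw [e2]
      linarith
  have bound : ∀ k : ℕ, |(k:ℝ)*((q:ℝ)*φ - c)| ≤ 1 := by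
    intro k
    have hA := mult k
    have f1 : ((⌊((x+k*q+1:ℕ):ℝ)*φ⌋:ℝ)) ≤ ((x+k*q+1:ℕ):ℝ)*φ := Int.floor_le _
    have f2 : ((x+k*q+1:ℕ):ℝ)*φ < ⌊((x+k*q+1:ℕ):ℝ)*φ⌋ + 1 := Int.lt_floor_add_one _
    have f3 : ((⌊((x+1:ℕ):ℝ)*φ⌋:ℝ)) ≤ ((x+1:ℕ):ℝ)*φ := Int.floor_le _
    have f4 : ((x+1:ℕ):ℝ)*φ < ⌊((x+1:ℕ):ℝ)*φ⌋ + 1 := Int.lt_floor_add_one _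
    rw [hA] at f1 f2
    rw [abs_le]
    push_cast at f1 f2 f3 f4 ⊢
    constructor <;> nlinarith
  have hzero : (q:ℝ)*φ - c = 0 := by
    by_contra hne
    have hd : 0 < |(q:ℝ)*φ - c| := abs_pos.2 hne
    obtain ⟨k, hk⟩ := exists_nat_gt (1 / |(q:ℝ)*φ - c|)
    have hk' : 1 < (k:ℝ) * |(q:ℝ)*φ - c| := by
      rw [div_lt_iff₀ hd] at hk
      linarith
    have := bound k
    rw [abs_mul, Nat.abs_cast] at this
    linarith
  -- φ rational, contradiction
  have : ((c / q : ℚ) : ℝ) = φ := by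
    push_cast
    rw [div_eq_iff (by positivity : ((q:ℝ)) ≠ 0)]
    linarith
  exact Real.goldenRatio_irrational ⟨_, this⟩

def Dset (a : Bool) (n : ℕ) : Set (List Bool) := {w | w ++ [a] ∈ Fset (n+1)}

lemma Dset_sub (a : Bool) (n : ℕ) : Dset a n ⊆ Fset n := by
  intro w hw
  have hlen : w.length = n := by
    have := hw.out.1
    simp at this
    omega
  have := take_mem hw.out
  rwa [List.take_left' hlen] at this

lemma Dset_union (n : ℕ) : Dset false n ∪ Dset true n = Fset n := by
  ext w
  constructor
  · rintro (h | h) <;> exact Dset_sub _ _ h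
  · intro hw
    obtain ⟨a, ha⟩ := ext_mem hw
    cases a
    · exact Or.inl ha
    · exact Or.inr ha

lemma inter_card (n : ℕ) (hn : 1 ≤ n) :
    (Dset false n ∩ Dset true n).ncard = 1 := by
  obtain ⟨w₀, hw₀⟩ := exists_RS n hn
  have hset : Dset false n ∩ Dset true n = {w₀} := by
    ext w
    constructor
    · rintro ⟨h1, h2⟩
      have hlen : w.length = n := by
        have := h1.out.1; simp at this; omega
      exact RS_unique n w w₀ ⟨hlen, h1, h2⟩ hw₀
    · rintro rfl
      exact ⟨hw₀.2.1, hw₀.2.2⟩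
  rw [hset, Set.ncard_singleton]

lemma Fset_succ_eq (n : ℕ) :
    Fset (n+1) = ((· ++ [false]) '' Dset false n) ∪ ((· ++ [true]) '' Dset true n) := by
  ext u
  constructor
  · intro hu
    have hne : u ≠ [] := by
      intro h; rw [h] at hu; have := hu.out.1; simp at this
    have key : u.dropLast ++ [u.getLast hne] = u := List.dropLast_append_getLast hne
    cases hlast : u.getLast hne
    · left
      refine ⟨u.dropLast, ?_, by rw [← hlast]; exact key⟩
      show u.dropLast ++ [false] ∈ Fset (n+1)
      rw [← hlast, key]; exact hu
    · right
      refine ⟨u.dropLast, ?_, by rw [← hlast]; exact key⟩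
      show u.dropLast ++ [true] ∈ Fset (n+1)
      rw [← hlast, key]; exact hu
  · rintro (⟨w, hw, rfl⟩ | ⟨w, hw, rfl⟩) <;> exact hw

lemma card_succ (n : ℕ) (hn : 1 ≤ n) :
    (Fset (n+1)).ncard = (Fset n).ncard + 1 := by
  have hDf : (Dset false n).Finite := (Fset_finite n).subset (Dset_sub _ _)
  have hDt : (Dset true n).Finite := (Fset_finite n).subset (Dset_sub _ _)
  have hdisj : Disjoint ((· ++ [false]) '' Dset false n) ((· ++ [true]) '' Dset true n) := by
    rw [Set.disjoint_left]
    rintro u ⟨w, _, rfl⟩ ⟨v, _, hv⟩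
    have := (List.append_inj' hv.symm rfl).2
    simp at this
  rw [Fset_succ_eq n,
    Set.ncard_union_eq hdisj (hDf.image _) (hDt.image _),
    Set.ncard_image_of_injective _ (List.append_left_injective _),
    Set.ncard_image_of_injective _ (List.append_left_injective _)]
  have := Set.ncard_union_add_ncard_inter (Dset false n) (Dset true n) hDf hDt
  rw [Dset_union n, inter_card n hn] at this
  omega

lemma Fset_one_card : (Fset 1).ncard = 2 := by
  have h0 : fibWord 0 = false := rfl
  have h1 : fibWord 1 = true := rfl
  have hset : Fset 1 = {[false], [true]} := by
    ext u
    constructor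
    · rintro ⟨hlen, _⟩
      obtain ⟨a, rfl⟩ := List.length_eq_one_iff.1 hlen
      cases a
      · exact Or.inl rfl
      · exact Or.inr rfl
    · rintro (rfl | rfl)
      · have : [false] = win 0 1 := by simp [win, List.range_succ, h0]
        rw [this]; exact win_mem 0 1
      · have : [true] = win 1 1 := by simp [win, List.range_succ, h1]
        rw [this]; exact win_mem 1 1
  rw [hset, Set.ncard_pair (by simp)]

lemma Fset_card : ∀ n, 1 ≤ n → (Fset n).ncard = n + 1 := by
  intro n
  induction n with
  | zero => omega
  | succ m ih =>
    intro _
    rcases Nat.eq_zero_or_pos m with h0 | h1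
    · subst h0; exact Fset_one_card
    · rw [card_succ m h1, ih h1]

/-- The Fibonacci word is an infinite Sturmian word:
`p_f(n) = n + 1` for all `n ≥ 1`. -/
theorem fibWord_sturmian (n : ℕ) (hn : 1 ≤ n) :
    icomplexity fibWord n = n + 1 := by
  have h : icomplexity fibWord n = (Fset n).ncard := rfl
  rw [h, Fset_card n hn]
end

section
/- For every N ≥ 1, there exists a binary word w of length N such that p_w(n) = n + 1 for all 1 ≤ n ≤ ⌊N/2⌋, and p_w(n) = N − n + 1 for all ⌈N/2⌉ ≤ n ≤ N. -/
/-- The subword complexity of a finite word `w`: the number of distinct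
subwords (contiguous factors) of `w` of length `n`. -/
noncomputable def complexity {A : Type*} (w : List A) (n : ℕ) : ℕ :=
  Set.ncard {u : List A | u.length = n ∧ u <:+: w}

/-- A window containing a single `true` at offset `j` (for `j < n`). -/
def gw (n j : ℕ) : List Bool :=
  List.replicate j false ++ true :: List.replicate (n - j - 1) false

lemma gw_length {n j : ℕ} (h : j < n) : (gw n j).length = n := by
  simp [gw]; omega

lemma gw_getElem_self (n j : ℕ) : (gw n j)[j]? = some true := by
  rw [gw, List.getElem?_append_right (by simp)]
  simp

lemma gw_getElem_lt {n j k : ℕ} (h : k < j) : (gw n j)[k]? = some false := by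
  rw [gw, List.getElem?_append_left (by simpa using h)]
  simp [h]

lemma gw_inj {n j j' : ℕ} (h : gw n j = gw n j') : j = j' := by
  rcases lt_trichotomy j j' with hlt | he | hgt
  · have := gw_getElem_self n j
    rw [h, gw_getElem_lt hlt] at this
    simp at this
  · exact he
  · have := gw_getElem_self n j'
    rw [← h, gw_getElem_lt hgt] at this
    simp at this

lemma true_mem_gw (n j : ℕ) : true ∈ gw n j := by simp [gw]

/-- The length-`n` window starting at position `i` of the word
`0^a 1 0^b`. -/
lemma window (a b n i : ℕ) (h : i + n ≤ a + b + 1) :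
    ((List.replicate a false ++ true :: List.replicate b false).drop i).take n =
      if i ≤ a ∧ a < i + n then gw n (a - i) else List.replicate n false := by
  split_ifs with hc
  · obtain ⟨h1, h2⟩ := hc
    have hsplit : (List.replicate a (false : Bool) ++ true :: List.replicate b false)
        = List.replicate i false ++
          (gw n (a - i) ++ List.replicate (b - (n - (a - i) - 1)) false) := by
      have e1 : List.replicate a (false : Bool)
          = List.replicate i false ++ List.replicate (a - i) false := by
        rw [← List.replicate_add]; congr 1; omega
      have e2 : List.replicate b (false : Bool)
          = List.replicate (n - (a - i) - 1) false ++
            List.replicate (b - (n - (a - i) - 1)) false := by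
        rw [← List.replicate_add]; congr 1; omega
      rw [e1, e2, gw]; simp only [List.append_assoc, List.cons_append]
    rw [hsplit, List.drop_left' (by simp), List.take_left' (gw_length (by omega))]
  · rcases le_or_gt i a with hia | hia
    · -- no `true` in the window: window lies in the left block, `n ≤ a - i`
      have hn : n ≤ a - i := by omega
      rw [List.drop_append, List.take_append,
        List.drop_replicate, List.take_replicate, List.length_replicate]
      have e1 : n ⊓ (a - i) = n := by omega
      have e2 : n - (a - i) = 0 := by omega
      rw [e1, e2, List.take_zero, List.append_nil]
    · -- window lies in the right block
      have : (List.replicate a (false : Bool) ++ true :: List.replicate b false)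
          = (List.replicate a false ++ [true]) ++ List.replicate b false := by simp
      rw [this, List.drop_append]
      have hlen : (List.replicate a (false : Bool) ++ [true]).length = a + 1 := by simp
      rw [List.drop_eq_nil_of_le (by omega), List.nil_append, hlen,
        List.drop_replicate, List.take_replicate]
      congr 1
      omega

/-- Characterization of the length-`n` factors as windows. -/
lemma factor_set_eq {A : Type*} (w : List A) (n : ℕ) (hn : n ≤ w.length) :
    {u : List A | u.length = n ∧ u <:+: w} =
      (fun i => (w.drop i).take n) '' Set.Iic (w.length - n) := by
  ext u
  constructor
  · rintro ⟨hlen, s, t, hst⟩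
    refine ⟨s.length, ?_, ?_⟩
    · have := congrArg List.length hst
      simp at this
      simp only [Set.mem_Iic]
      omega
    · have hdrop : w.drop s.length = u ++ t := by
        rw [← hst, List.append_assoc, List.drop_left]
      show List.take n (List.drop s.length w) = u
      rw [hdrop, ← hlen, List.take_left]
  · rintro ⟨i, hi, rfl⟩
    simp only [Set.mem_Iic] at hi
    constructor
    · simp only [List.length_take, List.length_drop]
      omega
    · exact ((List.take_prefix n _).isInfix).trans ((List.drop_suffix i w).isInfix)

lemma ncard_Iic (m : ℕ) : (Set.Iic m).ncard = m + 1 := by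
  rw [← Finset.coe_Iic, Set.ncard_coe_finset, Nat.card_Iic]

lemma ncard_Iio (m : ℕ) : (Set.Iio m).ncard = m := by
  rw [← Finset.coe_Iio, Set.ncard_coe_finset, Nat.card_Iio]

/-- For every `N ≥ 1` there is a binary word `w` of length `N` with
`p_w(n) = n + 1` for `1 ≤ n ≤ ⌊N/2⌋` and `p_w(n) = N - n + 1` for
`⌈N/2⌉ ≤ n ≤ N`. -/
theorem exists_peak_word (N : ℕ) (hN : 1 ≤ N) :
    ∃ w : List Bool, w.length = N ∧
      (∀ n, 1 ≤ n → n ≤ N / 2 → complexity w n = n + 1) ∧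
      (∀ n, (N + 1) / 2 ≤ n → n ≤ N → complexity w n = N - n + 1) := by
  set a := N / 2 with ha
  set b := N - 1 - N / 2 with hb
  set w : List Bool := List.replicate a false ++ true :: List.replicate b false with hw
  have hab : a + b + 1 = N := by omega
  have hba : b ≤ a := by omega
  have hlen : w.length = N := by simp [hw]; omega
  -- the two regimes
  have key1 : ∀ n, 1 ≤ n → n ≤ a → complexity w n = n + 1 := by
    intro n hn1 hna
    have hnN : n ≤ N := by omega
    have hset : {u : List Bool | u.length = n ∧ u <:+: w}
        = gw n '' Set.Iio n ∪ {List.replicate n false} := by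
      rw [factor_set_eq w n (by omega), hlen]
      ext u
      constructor
      · rintro ⟨i, hi, rfl⟩
        simp only [Set.mem_Iic] at hi
        dsimp only
        rw [window a b n i (by omega)]
        split_ifs with hc
        · left
          exact ⟨a - i, by simp only [Set.mem_Iio]; omega, rfl⟩
        · right; rfl
      · rintro (⟨j, hj, rfl⟩ | hu)
        · simp only [Set.mem_Iio] at hj
          refine ⟨a - j, by simp only [Set.mem_Iic]; omega, ?_⟩
          dsimp only
          rw [window a b n (a - j) (by omega), if_pos (by omega)]
          congr 1
          omega
        · refine ⟨0, by simp only [Set.mem_Iic]; omega, ?_⟩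
          dsimp only
          rw [window a b n 0 (by omega), if_neg (by omega)]
          exact hu.symm
    rw [complexity, hset, Set.ncard_union_eq, Set.ncard_image_of_injOn
      (fun x _ y _ h => gw_inj h), ncard_Iio, Set.ncard_singleton]
    · rw [Set.disjoint_singleton_right]
      rintro ⟨j, _, hj⟩
      have := true_mem_gw n j
      rw [hj] at this
      simp [List.mem_replicate] at this
  refine ⟨w, hlen, fun n hn1 hn2 => key1 n hn1 hn2, ?_⟩
  intro n hn1 hn2
  rcases le_or_gt n a with hna | hna
  · -- forces N = 2n
    have hN2 : N = 2 * n := by omega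
    have := key1 n (by omega) hna
    rw [this]; omega
  · -- n ≥ a + 1
    have hset : {u : List Bool | u.length = n ∧ u <:+: w}
        = (fun i => gw n (a - i)) '' Set.Iic (N - n) := by
      rw [factor_set_eq w n (by omega), hlen]
      apply Set.image_congr
      intro i hi
      simp only [Set.mem_Iic] at hi
      rw [window a b n i (by omega), if_pos (by omega)]
    rw [complexity, hset, Set.ncard_image_of_injOn, ncard_Iic]
    intro x hx y hy hxy
    simp only [Set.mem_Iic] at hx hy
    have := gw_inj hxy
    omega
end
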